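/- Fix integers 0 ≤ t < k ≤ n. Every ℤ-valued k-uniform null t-design on the subsets of {1,…,n} is a ℤ-linear combination of pods, i.e., the ℤ-module of ℤ-valued k-uniform null t-designs is generated by the pod designs. -/

import Mathlib

attribute [local instance] Classical.propDecidable

/-- The `(t,k)`-pod determined by pairwise distinct elements
`a_1,b_1,…,a_{t+1},b_{t+1},c_1,…,c_{k−t−1}`: it takes value `(−1)^{#{i : b_i ∈ F}}`
on each `k`-subset `F` consisting of exactly one element of each pair `{a_i, b_i}`
together with all the `c_j`, and value `0` elsewhere. Its values are the
coefficients of `(x_{a_1}−x_{b_1})⋯(x_{a_{t+1}}−x_{b_{t+1}})·x_{c_1}⋯x_{c_{k−t−1}}`. -/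
noncomputable def pod (n k t : ℕ) (a b : Fin (t + 1) → Fin n)
    (c : Fin (k - t - 1) → Fin n) : Finset (Fin n) → ℤ :=
  fun F =>
    if (∀ j, c j ∈ F) ∧ (∀ i, (a i ∈ F ↔ b i ∉ F)) ∧
        F ⊆ Finset.image a Finset.univ ∪ Finset.image b Finset.univ ∪
              Finset.image c Finset.univ
    then (-1) ^ (Finset.univ.filter (fun i => b i ∈ F)).card
    else 0

namespace StmtAux

open Finset
open scoped symmDiff

variable {n : ℕ}

/-- Binary encoding of a finset. -/
def val (F : Finset (Fin n)) : ℕ := ∑ x ∈ F, 2 ^ (x : ℕ)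

lemma val_image (s : Finset (Fin n)) :
    val s = ∑ m ∈ s.image (fun z : Fin n => (z : ℕ)), 2 ^ m := by
  rw [Finset.sum_image (fun u _ v _ huv => Fin.val_injective huv)]
  rfl

lemma val_lt {F G : Finset (Fin n)} (x : Fin n) (hxF : x ∈ F) (hxG : x ∉ G)
    (h : ∀ z ∈ G, z ∉ F → z < x) : val G < val F := by
  classical
  have hGF : val (G \ F) < 2 ^ (x : ℕ) := by
    rw [val_image]
    refine Nat.geomSum_lt le_rfl ?_
    intro m hm
    simp only [Finset.mem_image, Finset.mem_sdiff] at hm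
    obtain ⟨z, ⟨hzG, hzF⟩, rfl⟩ := hm
    exact h z hzG hzF
  have e1 : val G = val (G ∩ F) + val (G \ F) := by
    rw [val, val, val, Finset.sum_inter_add_sum_sdiff]
  have e2 : val F = val (F ∩ G) + val (F \ G) := by
    rw [val, val, val, Finset.sum_inter_add_sum_sdiff]
  have h3 : 2 ^ (x : ℕ) ≤ val (F \ G) := by
    refine Finset.single_le_sum (f := fun z : Fin n => 2 ^ (z : ℕ)) (fun _ _ => Nat.zero_le _) ?_
    exact Finset.mem_sdiff.2 ⟨hxF, hxG⟩
  have : val G < val (G ∩ F) + 2 ^ (x : ℕ) := by omega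
  rw [Finset.inter_comm] at this
  omega

lemma val_injective : Function.Injective (val (n := n)) := by
  intro F G hFG
  by_contra hne
  have hs : (F ∆ G).Nonempty := Finset.symmDiff_nonempty.2 hne
  set x := (F ∆ G).max' hs with hx
  have hxmem : x ∈ F ∆ G := Finset.max'_mem _ hs
  have hmax : ∀ z ∈ F ∆ G, z ≤ x := fun z hz => Finset.le_max' _ z hz
  rw [Finset.mem_symmDiff] at hxmem
  rcases hxmem with ⟨hxF, hxG⟩ | ⟨hxG, hxF⟩
  · have : val G < val F := by
      refine val_lt x hxF hxG ?_
      intro z hzG hzF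
      have hz : z ∈ F ∆ G := Finset.mem_symmDiff.2 (Or.inr ⟨hzG, hzF⟩)
      have := hmax z hz
      rcases lt_or_eq_of_le this with h | h
      · exact h
      · exact absurd (h ▸ hzG) hxG
    omega
  · have : val F < val G := by
      refine val_lt x hxG hxF ?_
      intro z hzF hzG
      have hz : z ∈ F ∆ G := Finset.mem_symmDiff.2 (Or.inl ⟨hzF, hzG⟩)
      have := hmax z hz
      rcases lt_or_eq_of_le this with h | h
      · exact h
      · exact absurd (h ▸ hzF) hxF
    omega

section PodLemmas

variable {k t : ℕ} {a b : Fin (t + 1) → Fin n} {c : Fin (k - t - 1) → Fin n}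

lemma inj_a (hinj : Function.Injective (Sum.elim a (Sum.elim b c))) :
    Function.Injective a := fun i i' h => by
  have := hinj (a₁ := Sum.inl i) (a₂ := Sum.inl i') h
  simpa using this

lemma inj_b (hinj : Function.Injective (Sum.elim a (Sum.elim b c))) :
    Function.Injective b := fun i i' h => by
  have := hinj (a₁ := Sum.inr (Sum.inl i)) (a₂ := Sum.inr (Sum.inl i')) h
  simpa using this

lemma inj_c (hinj : Function.Injective (Sum.elim a (Sum.elim b c))) :
    Function.Injective c := fun i i' h => by
  have := hinj (a₁ := Sum.inr (Sum.inr i)) (a₂ := Sum.inr (Sum.inr i')) h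
  simpa using this

lemma ne_ab (hinj : Function.Injective (Sum.elim a (Sum.elim b c))) (i i' : Fin (t + 1)) :
    a i ≠ b i' := fun h => by
  have := hinj (a₁ := Sum.inl i) (a₂ := Sum.inr (Sum.inl i')) h
  simp at this

lemma ne_ac (hinj : Function.Injective (Sum.elim a (Sum.elim b c))) (i : Fin (t + 1))
    (j : Fin (k - t - 1)) : a i ≠ c j := fun h => by
  have := hinj (a₁ := Sum.inl i) (a₂ := Sum.inr (Sum.inr j)) h
  simp at this

lemma ne_bc (hinj : Function.Injective (Sum.elim a (Sum.elim b c))) (i : Fin (t + 1))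
    (j : Fin (k - t - 1)) : b i ≠ c j := fun h => by
  have := hinj (a₁ := Sum.inr (Sum.inl i)) (a₂ := Sum.inr (Sum.inr j)) h
  simp at this

/-- Any set where the pod is nonzero has cardinality `k`. -/
lemma pod_card (htk : t < k) (hinj : Function.Injective (Sum.elim a (Sum.elim b c)))
    (F : Finset (Fin n)) (hF : pod n k t a b c F ≠ 0) : F.card = k := by
  classical
  rw [pod] at hF
  by_cases hcond : (∀ j, c j ∈ F) ∧ (∀ i, (a i ∈ F ↔ b i ∉ F)) ∧
      F ⊆ Finset.image a Finset.univ ∪ Finset.image b Finset.univ ∪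
            Finset.image c Finset.univ
  swap
  · rw [if_neg hcond] at hF; exact absurd rfl hF
  obtain ⟨h1, h2, h3⟩ := hcond
  set x : Fin (t + 1) → Fin n := fun i => if b i ∈ F then b i else a i with hxdef
  have hFeq : F = Finset.image x Finset.univ ∪ Finset.image c Finset.univ := by
    apply Finset.Subset.antisymm
    · intro y hy
      have := h3 hy
      simp only [Finset.mem_union, Finset.mem_image, Finset.mem_univ, true_and] at this ⊢
      rcases this with (⟨i, rfl⟩ | ⟨i, rfl⟩) | ⟨j, rfl⟩
      · left
        refine ⟨i, ?_⟩
        have hb : b i ∉ F := by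
          intro hb
          exact ((h2 i).1 hy) hb
        simp [hxdef, hb]
      · left
        refine ⟨i, ?_⟩
        simp [hxdef, hy]
      · right; exact ⟨j, rfl⟩
    · intro y hy
      simp only [Finset.mem_union, Finset.mem_image, Finset.mem_univ, true_and] at hy
      rcases hy with ⟨i, rfl⟩ | ⟨j, rfl⟩
      · by_cases hb : b i ∈ F
        · simp [hxdef, hb]
        · simp only [hxdef, hb, if_false]
          exact (h2 i).2 hb
      · exact h1 j
  have hxinj : Function.Injective x := by
    intro i i' h
    simp only [hxdef] at h
    by_cases hb : b i ∈ F <;> by_cases hb' : b i' ∈ F <;> simp [hb, hb'] at h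
    · exact inj_b hinj h
    · exact absurd h.symm (ne_ab hinj i' i)
    · exact absurd h (ne_ab hinj i i')
    · exact inj_a hinj h
  have hdisj : Disjoint (Finset.image x Finset.univ) (Finset.image c Finset.univ) := by
    rw [Finset.disjoint_left]
    intro y hy hy'
    simp only [Finset.mem_image, Finset.mem_univ, true_and] at hy hy'
    obtain ⟨i, rfl⟩ := hy
    obtain ⟨j, hj⟩ := hy'
    simp only [hxdef] at hj
    by_cases hb : b i ∈ F <;> simp [hb] at hj
    · exact ne_bc hinj i j hj.symm
    · exact ne_ac hinj i j hj.symm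
  rw [hFeq, Finset.card_union_of_disjoint hdisj,
    Finset.card_image_of_injective _ hxinj,
    Finset.card_image_of_injective _ (inj_c hinj)]
  simp only [Finset.card_univ, Fintype.card_fin]
  omega

lemma cond_toggle (hinj : Function.Injective (Sum.elim a (Sum.elim b c))) (i₀ : Fin (t + 1))
    {F : Finset (Fin n)}
    (h1 : ∀ j, c j ∈ F) (h2 : ∀ i, (a i ∈ F ↔ b i ∉ F))
    (h3 : F ⊆ Finset.image a Finset.univ ∪ Finset.image b Finset.univ ∪
        Finset.image c Finset.univ) :
    (∀ j, c j ∈ F ∆ {a i₀, b i₀}) ∧ (∀ i, (a i ∈ F ∆ {a i₀, b i₀} ↔ b i ∉ F ∆ {a i₀, b i₀})) ∧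
      F ∆ {a i₀, b i₀} ⊆ Finset.image a Finset.univ ∪ Finset.image b Finset.univ ∪
        Finset.image c Finset.univ := by
  classical
  set P : Finset (Fin n) := {a i₀, b i₀} with hP
  have memP : ∀ z : Fin n, z ∈ P ↔ z = a i₀ ∨ z = b i₀ := by
    intro z; simp [hP]
  have toggle : ∀ z : Fin n, z ∉ P → (z ∈ F ∆ P ↔ z ∈ F) := by
    intro z hz
    rw [Finset.mem_symmDiff]
    tauto
  have toggle' : ∀ z : Fin n, z ∈ P → (z ∈ F ∆ P ↔ z ∉ F) := by
    intro z hz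
    rw [Finset.mem_symmDiff]
    tauto
  have hcP : ∀ j, c j ∉ P := by
    intro j hj
    rw [memP] at hj
    rcases hj with h | h
    · exact ne_ac hinj i₀ j h.symm
    · exact ne_bc hinj i₀ j h.symm
  have haP : ∀ i, i ≠ i₀ → a i ∉ P := by
    intro i hi hmem
    rw [memP] at hmem
    rcases hmem with h | h
    · exact hi (inj_a hinj h)
    · exact ne_ab hinj i i₀ h
  have hbP : ∀ i, i ≠ i₀ → b i ∉ P := by
    intro i hi hmem
    rw [memP] at hmem
    rcases hmem with h | h
    · exact ne_ab hinj i₀ i h.symm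
    · exact hi (inj_b hinj h)
  refine ⟨fun j => (toggle _ (hcP j)).2 (h1 j), fun i => ?_, ?_⟩
  · by_cases hi : i = i₀
    · subst hi
      rw [toggle' _ (by rw [memP]; left; rfl), toggle' _ (by rw [memP]; right; rfl)]
      have := h2 i
      tauto
    · rw [toggle _ (haP i hi), toggle _ (hbP i hi)]
      exact h2 i
  · intro z hz
    rw [Finset.mem_symmDiff] at hz
    rcases hz with ⟨hzF, _⟩ | ⟨hzP, _⟩
    · exact h3 hzF
    · rw [memP] at hzP
      simp only [Finset.mem_union, Finset.mem_image, Finset.mem_univ, true_and]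
      rcases hzP with rfl | rfl
      · exact Or.inl (Or.inl ⟨i₀, rfl⟩)
      · exact Or.inl (Or.inr ⟨i₀, rfl⟩)

lemma pod_toggle (hinj : Function.Injective (Sum.elim a (Sum.elim b c))) (i₀ : Fin (t + 1))
    (F : Finset (Fin n)) :
    pod n k t a b c (F ∆ {a i₀, b i₀}) = - pod n k t a b c F := by
  classical
  set P : Finset (Fin n) := {a i₀, b i₀} with hP
  have memP : ∀ z : Fin n, z ∈ P ↔ z = a i₀ ∨ z = b i₀ := by
    intro z; simp [hP]
  have hinv : F ∆ P ∆ P = F := symmDiff_symmDiff_cancel_right P F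
  have key : ∀ G : Finset (Fin n),
      (∀ j, c j ∈ G) → (∀ i, (a i ∈ G ↔ b i ∉ G)) →
      G ⊆ Finset.image a Finset.univ ∪ Finset.image b Finset.univ ∪
          Finset.image c Finset.univ →
      pod n k t a b c (G ∆ P) = - pod n k t a b c G := by
    intro G h1 h2 h3
    have hcond' := cond_toggle hinj i₀ h1 h2 h3
    rw [pod, pod, if_pos hcond', if_pos ⟨h1, h2, h3⟩]
    have hbP : ∀ i, i ≠ i₀ → (b i ∈ G ∆ P ↔ b i ∈ G) := by
      intro i hi
      rw [Finset.mem_symmDiff]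
      have : b i ∉ P := by
        intro hmem
        rw [memP] at hmem
        rcases hmem with h | h
        · exact ne_ab hinj i₀ i h.symm
        · exact hi (inj_b hinj h)
      tauto
    have hb0 : (b i₀ ∈ G ∆ P ↔ b i₀ ∉ G) := by
      rw [Finset.mem_symmDiff]
      have : b i₀ ∈ P := by rw [memP]; right; rfl
      tauto
    by_cases hcase : b i₀ ∈ G
    · have hset : Finset.univ.filter (fun i => b i ∈ G ∆ P)
          = (Finset.univ.filter (fun i => b i ∈ G)).erase i₀ := by
        ext i
        simp only [Finset.mem_filter, Finset.mem_univ, true_and, Finset.mem_erase]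
        by_cases hi : i = i₀
        · subst hi; simp [hb0.2, hcase]
          intro h; exact absurd hcase (hb0.1 h)
        · rw [hbP i hi]; tauto
      have hmem0 : i₀ ∈ Finset.univ.filter (fun i => b i ∈ G) := by
        simp [hcase]
      have hpos : 1 ≤ (Finset.univ.filter (fun i => b i ∈ G)).card :=
        Finset.card_pos.2 ⟨i₀, hmem0⟩
      obtain ⟨m', hm'⟩ : ∃ m', (Finset.univ.filter (fun i => b i ∈ G)).card = m' + 1 :=
        ⟨(Finset.univ.filter (fun i => b i ∈ G)).card - 1, by omega⟩
      rw [hset, Finset.card_erase_of_mem hmem0, hm', Nat.add_sub_cancel, pow_succ]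
      ring
    · have hset : Finset.univ.filter (fun i => b i ∈ G ∆ P)
          = insert i₀ (Finset.univ.filter (fun i => b i ∈ G)) := by
        ext i
        simp only [Finset.mem_filter, Finset.mem_univ, true_and, Finset.mem_insert]
        by_cases hi : i = i₀
        · subst hi; simp [hb0.2 hcase]
        · rw [hbP i hi]; tauto
      have hmem0 : i₀ ∉ Finset.univ.filter (fun i => b i ∈ G) := by
        simp [hcase]
      rw [hset, Finset.card_insert_of_notMem hmem0, pow_succ]
      ring
  by_cases hcond : (∀ j, c j ∈ F) ∧ (∀ i, (a i ∈ F ↔ b i ∉ F)) ∧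
      F ⊆ Finset.image a Finset.univ ∪ Finset.image b Finset.univ ∪
            Finset.image c Finset.univ
  · exact key F hcond.1 hcond.2.1 hcond.2.2
  · have hzero : pod n k t a b c F = 0 := by rw [pod, if_neg hcond]
    have hzero' : pod n k t a b c (F ∆ P) = 0 := by
      rw [pod]
      by_cases hcond' : (∀ j, c j ∈ F ∆ P) ∧ (∀ i, (a i ∈ F ∆ P ↔ b i ∉ F ∆ P)) ∧
          F ∆ P ⊆ Finset.image a Finset.univ ∪ Finset.image b Finset.univ ∪
                Finset.image c Finset.univ
      · exfalso
        have := cond_toggle hinj i₀ hcond'.1 hcond'.2.1 hcond'.2.2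
        rw [hinv] at this
        exact hcond this
      · rw [if_neg hcond']
    rw [hzero, hzero']
    ring

/-- Pods are null `t`-designs. -/
lemma pod_design (hinj : Function.Injective (Sum.elim a (Sum.elim b c)))
    (X : Finset (Fin n)) (hX : X.card ≤ t) :
    ∑ F ∈ Finset.univ.filter (fun F : Finset (Fin n) => X ⊆ F), pod n k t a b c F = 0 := by
  classical
  -- find a pair disjoint from X
  have hpair : ∃ i₀ : Fin (t + 1), a i₀ ∉ X ∧ b i₀ ∉ X := by
    by_contra hcon
    push_neg at hcon
    set e : Fin (t + 1) → Fin n := fun i => if a i ∈ X then a i else b i with he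
    have hrange : ∀ i, e i ∈ X := by
      intro i
      by_cases h : a i ∈ X
      · simp [he, h]
      · simp only [he, h, if_false]
        exact hcon i h
    have heinj : Function.Injective e := by
      intro i i' h
      simp only [he] at h
      by_cases h1 : a i ∈ X <;> by_cases h2 : a i' ∈ X <;> simp [h1, h2] at h
      · exact inj_a hinj h
      · exact absurd h (ne_ab hinj i i')
      · exact absurd h.symm (ne_ab hinj i' i)
      · exact inj_b hinj h
    have : t + 1 ≤ X.card := by
      have := Finset.card_le_card_of_injOn (s := Finset.univ) (t := X) e
        (fun i _ => hrange i) (Function.Injective.injOn heinj)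
      simpa using this
    omega
  obtain ⟨i₀, haX, hbX⟩ := hpair
  set P : Finset (Fin n) := {a i₀, b i₀} with hP
  refine Finset.sum_involution (fun F _ => F ∆ P) ?_ ?_ ?_ ?_
  · intro F _
    rw [pod_toggle hinj i₀ F]
    ring
  · intro F _ _
    intro heq
    have heq' : F ∆ P = F := heq
    have : a i₀ ∈ F ∆ P ↔ a i₀ ∈ F := by rw [heq']
    rw [Finset.mem_symmDiff] at this
    have haP : a i₀ ∈ P := by simp [hP]
    tauto
  · intro F hF
    simp only [Finset.mem_filter, Finset.mem_univ, true_and] at hF ⊢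
    intro x hx
    have hxP : x ∉ P := by
      intro hxP
      simp only [hP, Finset.mem_insert, Finset.mem_singleton] at hxP
      rcases hxP with rfl | rfl
      · exact haX hx
      · exact hbX hx
    rw [Finset.mem_symmDiff]
    exact Or.inl ⟨hF hx, hxP⟩
  · intro F _
    exact symmDiff_symmDiff_cancel_right P F

end PodLemmas

/-- Extended design condition: also avoiding a set `Y`. -/
lemma design_ext {t : ℕ} (f : Finset (Fin n) → ℤ)
    (hdes : ∀ X : Finset (Fin n), X.card ≤ t →
      ∑ F ∈ Finset.univ.filter (fun F : Finset (Fin n) => X ⊆ F), f F = 0) :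
    ∀ Y X : Finset (Fin n), Disjoint X Y → X.card + Y.card ≤ t →
      ∑ F ∈ Finset.univ.filter (fun F : Finset (Fin n) => X ⊆ F ∧ Disjoint F Y), f F = 0 := by
  classical
  intro Y
  induction Y using Finset.induction_on with
  | empty =>
      intro X _ hcard
      have : (Finset.univ.filter (fun F : Finset (Fin n) => X ⊆ F ∧ Disjoint F ∅))
          = Finset.univ.filter (fun F : Finset (Fin n) => X ⊆ F) := by
        apply Finset.filter_congr
        intro F _
        simp
      rw [this]
      exact hdes X (by simpa using hcard)
  | @insert y Y' hy ih =>
      intro X hdisj hcard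
      have hyX : y ∉ X := by
        intro h
        exact (Finset.disjoint_left.1 hdisj h) (Finset.mem_insert_self y Y')
      have hXY' : Disjoint X Y' :=
        Finset.disjoint_of_subset_right (Finset.subset_insert y Y') hdisj
      have hcard' : X.card + Y'.card ≤ t := by
        rw [Finset.card_insert_of_notMem hy] at hcard
        omega
      have hX'Y' : Disjoint (insert y X) Y' := by
        rw [Finset.disjoint_left]
        intro x hx hxY'
        rcases Finset.mem_insert.1 hx with rfl | hx'
        · exact hy hxY'
        · exact Finset.disjoint_left.1 hXY' hx' hxY'
      have hcard'' : (insert y X).card + Y'.card ≤ t := by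
        rw [Finset.card_insert_of_notMem hyX]
        rw [Finset.card_insert_of_notMem hy] at hcard
        omega
      have hsplit : ∑ F ∈ Finset.univ.filter
            (fun F : Finset (Fin n) => X ⊆ F ∧ Disjoint F Y'), f F
          = (∑ F ∈ Finset.univ.filter
              (fun F : Finset (Fin n) => insert y X ⊆ F ∧ Disjoint F Y'), f F)
            + ∑ F ∈ Finset.univ.filter
              (fun F : Finset (Fin n) => X ⊆ F ∧ Disjoint F (insert y Y')), f F := by
        rw [← Finset.sum_filter_add_sum_filter_not
          (Finset.univ.filter (fun F : Finset (Fin n) => X ⊆ F ∧ Disjoint F Y'))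
          (fun F => y ∈ F)]
        have e1 : (Finset.univ.filter
              (fun F : Finset (Fin n) => X ⊆ F ∧ Disjoint F Y')).filter (fun F => y ∈ F)
            = Finset.univ.filter
              (fun F : Finset (Fin n) => insert y X ⊆ F ∧ Disjoint F Y') := by
          ext F
          simp only [Finset.mem_filter, Finset.mem_univ, true_and,
            Finset.insert_subset_iff]
          tauto
        have e2 : (Finset.univ.filter
              (fun F : Finset (Fin n) => X ⊆ F ∧ Disjoint F Y')).filter (fun F => ¬ y ∈ F)
            = Finset.univ.filter
              (fun F : Finset (Fin n) => X ⊆ F ∧ Disjoint F (insert y Y')) := by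
          ext F
          simp only [Finset.mem_filter, Finset.mem_univ, true_and,
            Finset.disjoint_insert_right]
          tauto
        rw [e1, e2]
      have h1 := ih X hXY' hcard'
      have h2 := ih (insert y X) hX'Y' hcard''
      rw [hsplit, h2, zero_add] at h1
      exact h1

end StmtAux

theorem stmt_8 (n k t : ℕ) (htk : t < k) (hkn : k ≤ n)
    (f : Finset (Fin n) → ℤ)
    (hdes : ∀ X : Finset (Fin n), X.card ≤ t →
      ∑ F ∈ Finset.univ.filter (fun F : Finset (Fin n) => X ⊆ F), f F = 0)
    (hunif : ∀ F : Finset (Fin n), f F ≠ 0 → F.card = k) :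
    f ∈ Submodule.span ℤ
      {g : Finset (Fin n) → ℤ |
        ∃ (a b : Fin (t + 1) → Fin n) (c : Fin (k - t - 1) → Fin n),
          Function.Injective (Sum.elim a (Sum.elim b c)) ∧ g = pod n k t a b c} := by
  classical
  suffices H : ∀ N : ℕ, ∀ f : Finset (Fin n) → ℤ,
      (∀ X : Finset (Fin n), X.card ≤ t →
        ∑ F ∈ Finset.univ.filter (fun F : Finset (Fin n) => X ⊆ F), f F = 0) →
      (∀ F : Finset (Fin n), f F ≠ 0 → F.card = k) →
      (Finset.univ.filter (fun F : Finset (Fin n) => f F ≠ 0)).sup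
        (fun F => StmtAux.val F + 1) ≤ N →
      f ∈ Submodule.span ℤ
        {g : Finset (Fin n) → ℤ |
          ∃ (a b : Fin (t + 1) → Fin n) (c : Fin (k - t - 1) → Fin n),
            Function.Injective (Sum.elim a (Sum.elim b c)) ∧ g = pod n k t a b c} by
    exact H _ f hdes hunif le_rfl
  clear hdes hunif f
  intro N
  induction N using Nat.strong_induction_on with
  | _ N ih =>
  intro f hdes hunif hN
  by_cases hf0 : f = 0
  · subst hf0; exact Submodule.zero_mem _
  have hsupp : (Finset.univ.filter (fun F : Finset (Fin n) => f F ≠ 0)).Nonempty := by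
    obtain ⟨F1, hF1⟩ := Function.ne_iff.1 hf0
    exact ⟨F1, by simp only [Finset.mem_filter, Finset.mem_univ, true_and]; exact hF1⟩
  obtain ⟨F₀, hF₀mem, hF₀max⟩ :=
    Finset.exists_max_image (Finset.univ.filter (fun F : Finset (Fin n) => f F ≠ 0))
      StmtAux.val hsupp
  have hfF₀ : f F₀ ≠ 0 := (Finset.mem_filter.1 hF₀mem).2
  have hcardF₀ : F₀.card = k := hunif F₀ hfF₀
  set e := F₀.orderEmbOfFin hcardF₀ with he
  set b : Fin (t + 1) → Fin n :=
    fun i => e ⟨k - t - 1 + (i : ℕ), by have := i.2; omega⟩ with hbdef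
  set c : Fin (k - t - 1) → Fin n :=
    fun j => e ⟨(j : ℕ), by have := j.2; omega⟩ with hcdef
  have hbmem : ∀ i, b i ∈ F₀ := fun i => Finset.orderEmbOfFin_mem F₀ hcardF₀ _
  have hcmem : ∀ j, c j ∈ F₀ := fun j => Finset.orderEmbOfFin_mem F₀ hcardF₀ _
  have hrange : ∀ x ∈ F₀, ∃ j : Fin k, e j = x := by
    intro x hx
    have : x ∈ Set.range e := by
      rw [he, Finset.range_orderEmbOfFin]
      exact hx
    exact this
  have hF₀eq : F₀ = Finset.image b Finset.univ ∪ Finset.image c Finset.univ := by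
    apply Finset.Subset.antisymm
    · intro x hx
      obtain ⟨j, rfl⟩ := hrange x hx
      simp only [Finset.mem_union, Finset.mem_image, Finset.mem_univ, true_and]
      by_cases hj : (j : ℕ) < k - t - 1
      · right
        exact ⟨⟨(j : ℕ), hj⟩, congrArg e (Fin.ext rfl)⟩
      · left
        have hj2 : (j : ℕ) - (k - t - 1) < t + 1 := by have := j.2; omega
        refine ⟨⟨(j : ℕ) - (k - t - 1), hj2⟩, congrArg e (Fin.ext ?_)⟩
        simp only [Fin.val_mk]
        omega
    · intro x hx
      rcases Finset.mem_union.1 hx with h | h <;>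
        · simp only [Finset.mem_image, Finset.mem_univ, true_and] at h
          obtain ⟨i, rfl⟩ := h
          first
            | exact hbmem i
            | exact hcmem i
  set D := F₀ᶜ with hDdef
  have hDmem : ∀ x : Fin n, x ∈ D ↔ x ∉ F₀ := fun x => Finset.mem_compl
  -- Hall-type condition from the design equations
  have hHall : ∀ i : Fin (t + 1), (i : ℕ) + 1 ≤ (D.filter (fun z => z < b i)).card := by
    intro i
    by_contra hcon
    push_neg at hcon
    set Y := D.filter (fun z => z < b i) with hYdef
    set X := F₀.filter (fun z => b i < z) with hXdef
    have hYcard : Y.card ≤ (i : ℕ) := by omega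
    have hXcard : X.card ≤ t - (i : ℕ) := by
      have hsub : X ⊆ Finset.image b
          (Finset.univ.filter (fun i' : Fin (t + 1) => (i : ℕ) < (i' : ℕ))) := by
        intro x hx
        rw [hXdef, Finset.mem_filter] at hx
        obtain ⟨hxF₀, hbx⟩ := hx
        obtain ⟨j, rfl⟩ := hrange x hxF₀
        have hlt : (⟨k - t - 1 + (i : ℕ), by have := i.2; omega⟩ : Fin k) < j := by
          rw [← OrderEmbedding.lt_iff_lt e]
          exact hbx
        have hlt' : k - t - 1 + (i : ℕ) < (j : ℕ) := hlt
        have hj2 : (j : ℕ) - (k - t - 1) < t + 1 := by have := j.2; omega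
        simp only [Finset.mem_image, Finset.mem_filter, Finset.mem_univ, true_and]
        refine ⟨⟨(j : ℕ) - (k - t - 1), hj2⟩, by simp only [Fin.val_mk]; omega,
          congrArg e (Fin.ext ?_)⟩
        simp only [Fin.val_mk]
        omega
      have h1 : X.card ≤ (Finset.univ.filter
          (fun i' : Fin (t + 1) => (i : ℕ) < (i' : ℕ))).card :=
        le_trans (Finset.card_le_card hsub) (Finset.card_image_le)
      have h2 : (Finset.univ.filter
          (fun i' : Fin (t + 1) => (i : ℕ) < (i' : ℕ))).card ≤ t - (i : ℕ) := by
        have := Finset.card_le_card_of_injOn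
          (s := Finset.univ.filter (fun i' : Fin (t + 1) => (i : ℕ) < (i' : ℕ)))
          (t := Finset.range (t - (i : ℕ)))
          (fun i' : Fin (t + 1) => (i' : ℕ) - (i : ℕ) - 1)
          (fun i' hi' => by
            simp only [Finset.mem_coe, Finset.mem_filter, Finset.mem_univ, true_and] at hi'
            simp only [Finset.mem_coe, Finset.mem_range]
            have := i'.2
            omega)
          (fun i1 h1 i2 h2 hh => by
            simp only [Finset.coe_filter, Set.mem_setOf_eq] at h1 h2
            have hh' : (i1 : ℕ) - (i : ℕ) - 1 = (i2 : ℕ) - (i : ℕ) - 1 := hh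
            have v1 := i1.2
            have v2 := i2.2
            exact Fin.ext (by omega))
        simpa using this
      omega
    have hdisjXY : Disjoint X Y := by
      rw [Finset.disjoint_left]
      intro x hx hy
      rw [hXdef, Finset.mem_filter] at hx
      rw [hYdef, Finset.mem_filter] at hy
      exact ((hDmem x).1 hy.1) hx.1
    have h0 := StmtAux.design_ext f hdes Y X hdisjXY (by omega)
    have hsingle : ∑ F ∈ Finset.univ.filter
        (fun F : Finset (Fin n) => X ⊆ F ∧ Disjoint F Y), f F = f F₀ := by
      apply Finset.sum_eq_single_of_mem
      · simp only [Finset.mem_filter, Finset.mem_univ, true_and]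
        refine ⟨Finset.filter_subset _ _, ?_⟩
        rw [Finset.disjoint_left]
        intro x hx hy
        rw [hYdef, Finset.mem_filter] at hy
        exact ((hDmem x).1 hy.1) hx
      · intro F hF hne
        by_contra hfF
        simp only [Finset.mem_filter, Finset.mem_univ, true_and] at hF
        obtain ⟨hXF, hFY⟩ := hF
        have hcardF : F.card = k := hunif F hfF
        have hle : StmtAux.val F ≤ StmtAux.val F₀ :=
          hF₀max F (by simp only [Finset.mem_filter, Finset.mem_univ, true_and]; exact hfF)
        have hsub : F ⊆ F₀ := by
          intro x hxF
          by_contra hxF₀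
          rcases lt_trichotomy x (b i) with h | h | h
          · have hxY : x ∈ Y := by
              rw [hYdef, Finset.mem_filter]
              exact ⟨(hDmem x).2 hxF₀, h⟩
            exact Finset.disjoint_left.1 hFY hxF hxY
          · exact hxF₀ (h ▸ hbmem i)
          · have hlt : StmtAux.val F₀ < StmtAux.val F := by
              refine StmtAux.val_lt x hxF hxF₀ ?_
              intro z hz hzF
              by_cases hbz : b i < z
              · exact absurd (hXF (by rw [hXdef, Finset.mem_filter]; exact ⟨hz, hbz⟩)) hzF
              · exact lt_of_le_of_lt (not_lt.1 hbz) h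
            omega
        exact hne (Finset.eq_of_subset_of_card_le hsub (by omega))
    rw [hsingle] at h0
    exact hfF₀ h0
  have hD : t + 1 ≤ D.card := by
    have h1 := hHall (Fin.last t)
    have h2 : (D.filter (fun z => z < b (Fin.last t))).card ≤ D.card :=
      Finset.card_le_card (Finset.filter_subset _ _)
    simp only [Fin.val_last] at h1
    omega
  set ed := D.orderEmbOfFin (rfl : D.card = D.card) with hed
  set a : Fin (t + 1) → Fin n :=
    fun i => ed ⟨(i : ℕ), lt_of_lt_of_le i.2 hD⟩ with hadef
  have haD : ∀ i, a i ∈ D := fun i => Finset.orderEmbOfFin_mem D rfl _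
  have haF : ∀ i, a i ∉ F₀ := fun i => (hDmem _).1 (haD i)
  have hab : ∀ i, a i < b i := by
    intro i
    by_contra hcon
    push_neg at hcon
    have h1 : D.filter (fun z => z < b i) ⊆ D.filter (fun z => z < a i) := by
      intro x hx
      rw [Finset.mem_filter] at hx ⊢
      exact ⟨hx.1, lt_of_lt_of_le hx.2 hcon⟩
    have h2 : D.filter (fun z => z < a i) ⊆
        Finset.image (fun j : Fin D.card => ed j)
          (Finset.univ.filter (fun j : Fin D.card => (j : ℕ) < (i : ℕ))) := by
      intro x hx
      rw [Finset.mem_filter] at hx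
      obtain ⟨hxD, hxa⟩ := hx
      have : x ∈ Set.range ed := by
        rw [hed, Finset.range_orderEmbOfFin]
        exact hxD
      obtain ⟨j, rfl⟩ := this
      have hlt : j < (⟨(i : ℕ), lt_of_lt_of_le i.2 hD⟩ : Fin D.card) := by
        rw [← OrderEmbedding.lt_iff_lt ed]
        exact hxa
      simp only [Finset.mem_image, Finset.mem_filter, Finset.mem_univ, true_and]
      exact ⟨j, hlt, rfl⟩
    have h3 : (Finset.univ.filter (fun j : Fin D.card => (j : ℕ) < (i : ℕ))).card
        ≤ (i : ℕ) := by
      have := Finset.card_le_card_of_injOn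
        (s := Finset.univ.filter (fun j : Fin D.card => (j : ℕ) < (i : ℕ)))
        (t := Finset.range (i : ℕ))
        (fun j : Fin D.card => (j : ℕ))
        (fun j hj => by
          simp only [Finset.mem_coe, Finset.mem_filter, Finset.mem_univ, true_and] at hj
          simpa using hj)
        (fun j1 _ j2 _ hh => Fin.ext hh)
      simpa using this
    have h4 := hHall i
    have h5 := Finset.card_le_card h1
    have h6 := Finset.card_le_card h2
    have h7 := Finset.card_image_le (s := Finset.univ.filter
      (fun j : Fin D.card => (j : ℕ) < (i : ℕ))) (f := fun j : Fin D.card => ed j)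
    omega
  -- injectivity of the datum
  have hainj : Function.Injective a := by
    intro i i' h
    have h2 := ed.injective h
    have h3 := congrArg Fin.val h2
    simp only [Fin.val_mk] at h3
    exact Fin.ext h3
  have hbinj : Function.Injective b := by
    intro i i' h
    have h2 := e.injective h
    have h3 := congrArg Fin.val h2
    simp only [Fin.val_mk] at h3
    exact Fin.ext (by omega)
  have hcinj : Function.Injective c := by
    intro i i' h
    have h2 := e.injective h
    have h3 := congrArg Fin.val h2
    simp only [Fin.val_mk] at h3
    exact Fin.ext h3
  have hbc : ∀ i j, b i ≠ c j := by
    intro i j h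
    have h2 := e.injective h
    have h3 := congrArg Fin.val h2
    simp only [Fin.val_mk] at h3
    have := j.2
    omega
  have hinj : Function.Injective (Sum.elim a (Sum.elim b c)) := by
    intro x y h
    rcases x with i | i' | j <;> rcases y with i2 | i2' | j2 <;>
      simp only [Sum.elim_inl, Sum.elim_inr] at h
    · rw [hainj h]
    · exfalso; exact haF i (by rw [h]; exact hbmem i2')
    · exfalso; exact haF i (by rw [h]; exact hcmem j2)
    · exfalso; exact haF i2 (by rw [← h]; exact hbmem i')
    · rw [hbinj h]
    · exact absurd h (hbc i' j2)
    · exfalso; exact haF i2 (by rw [← h]; exact hcmem j)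
    · exact absurd h.symm (hbc i2' j)
    · rw [hcinj h]
  have hgS : pod n k t a b c ∈
      {g : Finset (Fin n) → ℤ |
        ∃ (a' b' : Fin (t + 1) → Fin n) (c' : Fin (k - t - 1) → Fin n),
          Function.Injective (Sum.elim a' (Sum.elim b' c')) ∧ g = pod n k t a' b' c'} :=
    ⟨a, b, c, hinj, rfl⟩
  -- pod value at F₀
  have hcond : (∀ j, c j ∈ F₀) ∧ (∀ i, (a i ∈ F₀ ↔ b i ∉ F₀)) ∧
      F₀ ⊆ Finset.image a Finset.univ ∪ Finset.image b Finset.univ ∪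
            Finset.image c Finset.univ := by
    refine ⟨hcmem, fun i => iff_of_false (haF i) (not_not_intro (hbmem i)), ?_⟩
    intro x hx
    rw [hF₀eq] at hx
    rcases Finset.mem_union.1 hx with h | h
    · exact Finset.mem_union_left _ (Finset.mem_union_right _ h)
    · exact Finset.mem_union_right _ h
  have hgF₀ : pod n k t a b c F₀ = (-1) ^ (t + 1) := by
    rw [pod, if_pos hcond]
    have : Finset.univ.filter (fun i => b i ∈ F₀) = Finset.univ :=
      Finset.filter_true_of_mem (fun i _ => hbmem i)
    rw [this]
    simp
  -- every other set in the support of the pod is smaller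
  have hglt : ∀ F, pod n k t a b c F ≠ 0 → F ≠ F₀ →
      StmtAux.val F < StmtAux.val F₀ := by
    intro F hgF hne
    rw [pod] at hgF
    by_cases hcondF : (∀ j, c j ∈ F) ∧ (∀ i, (a i ∈ F ↔ b i ∉ F)) ∧
        F ⊆ Finset.image a Finset.univ ∪ Finset.image b Finset.univ ∪
              Finset.image c Finset.univ
    swap
    · rw [if_neg hcondF] at hgF; exact absurd rfl hgF
    obtain ⟨h1, h2, h3⟩ := hcondF
    set Sa := Finset.univ.filter (fun i => a i ∈ F) with hSadef
    have hSa : Sa.Nonempty := by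
      by_contra hemp
      rw [Finset.not_nonempty_iff_eq_empty] at hemp
      have hano : ∀ i, a i ∉ F := by
        intro i hi
        have : i ∈ Sa := by rw [hSadef, Finset.mem_filter]; exact ⟨Finset.mem_univ _, hi⟩
        rw [hemp] at this
        exact absurd this (Finset.notMem_empty i)
      have hbin : ∀ i, b i ∈ F := by
        intro i
        by_contra hb
        exact hano i ((h2 i).2 hb)
      apply hne
      apply Finset.Subset.antisymm
      · intro x hx
        rcases Finset.mem_union.1 (h3 hx) with h | h
        · rcases Finset.mem_union.1 h with h' | h'
          · simp only [Finset.mem_image, Finset.mem_univ, true_and] at h'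
            obtain ⟨i, rfl⟩ := h'
            exact absurd hx (hano i)
          · simp only [Finset.mem_image, Finset.mem_univ, true_and] at h'
            obtain ⟨i, rfl⟩ := h'
            exact hbmem i
        · simp only [Finset.mem_image, Finset.mem_univ, true_and] at h
          obtain ⟨j, rfl⟩ := h
          exact hcmem j
      · intro x hx
        rw [hF₀eq] at hx
        rcases Finset.mem_union.1 hx with h | h <;>
          simp only [Finset.mem_image, Finset.mem_univ, true_and] at h
        · obtain ⟨i, rfl⟩ := h
          exact hbin i
        · obtain ⟨j, rfl⟩ := h
          exact h1 j
    obtain ⟨i₀, hi₀mem, hi₀max⟩ := Finset.exists_max_image Sa (fun i => b i) hSa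
    have hai₀ : a i₀ ∈ F := (Finset.mem_filter.1 hi₀mem).2
    have hbi₀ : b i₀ ∉ F := (h2 i₀).1 hai₀
    refine StmtAux.val_lt (b i₀) (hbmem i₀) hbi₀ ?_
    intro z hz hzF₀
    rcases Finset.mem_union.1 (h3 hz) with h | h
    · rcases Finset.mem_union.1 h with h' | h'
      · simp only [Finset.mem_image, Finset.mem_univ, true_and] at h'
        obtain ⟨i, rfl⟩ := h'
        have : i ∈ Sa := by rw [hSadef, Finset.mem_filter]; exact ⟨Finset.mem_univ _, hz⟩
        exact lt_of_lt_of_le (hab i) (hi₀max i this)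
      · simp only [Finset.mem_image, Finset.mem_univ, true_and] at h'
        obtain ⟨i, rfl⟩ := h'
        exact absurd (hbmem i) hzF₀
    · simp only [Finset.mem_image, Finset.mem_univ, true_and] at h
      obtain ⟨j, rfl⟩ := h
      exact absurd (hcmem j) hzF₀
  -- subtract the pod
  set m : ℤ := f F₀ * (-1) ^ (t + 1) with hmdef
  set f' : Finset (Fin n) → ℤ := f - m • pod n k t a b c with hf'def
  have hf'apply : ∀ F, f' F = f F - m * pod n k t a b c F := by
    intro F
    rw [hf'def]
    simp
  have hf'des : ∀ X : Finset (Fin n), X.card ≤ t →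
      ∑ F ∈ Finset.univ.filter (fun F : Finset (Fin n) => X ⊆ F), f' F = 0 := by
    intro X hX
    have : ∑ F ∈ Finset.univ.filter (fun F : Finset (Fin n) => X ⊆ F), f' F
        = (∑ F ∈ Finset.univ.filter (fun F : Finset (Fin n) => X ⊆ F), f F)
          - m * ∑ F ∈ Finset.univ.filter (fun F : Finset (Fin n) => X ⊆ F),
              pod n k t a b c F := by
      rw [Finset.mul_sum, ← Finset.sum_sub_distrib]
      exact Finset.sum_congr rfl (fun F _ => hf'apply F)
    rw [this, hdes X hX, StmtAux.pod_design hinj X hX]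
    ring
  have hf'unif : ∀ F : Finset (Fin n), f' F ≠ 0 → F.card = k := by
    intro F hF
    by_cases hfF : f F = 0
    · have hgF : pod n k t a b c F ≠ 0 := by
        intro hg
        apply hF
        rw [hf'apply, hfF, hg]
        ring
      exact StmtAux.pod_card htk hinj F hgF
    · exact hunif F hfF
  have hpow : ((-1 : ℤ)) ^ (t + 1) * (-1) ^ (t + 1) = 1 := by
    rw [← mul_pow]
    norm_num
  have hf'F₀ : f' F₀ = 0 := by
    rw [hf'apply, hgF₀, hmdef, mul_assoc, hpow, mul_one, sub_self]
  have hNge : StmtAux.val F₀ + 1 ≤ N :=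
    le_trans (Finset.le_sup (f := fun F => StmtAux.val F + 1) hF₀mem) hN
  have hmeas : (Finset.univ.filter (fun F : Finset (Fin n) => f' F ≠ 0)).sup
      (fun F => StmtAux.val F + 1) ≤ StmtAux.val F₀ := by
    apply Finset.sup_le
    intro F hF
    have hf'F : f' F ≠ 0 := (Finset.mem_filter.1 hF).2
    have hne : F ≠ F₀ := by
      intro h
      rw [h] at hf'F
      exact hf'F hf'F₀
    by_cases hfF : f F = 0
    · have hgF : pod n k t a b c F ≠ 0 := by
        intro hg
        apply hf'F
        rw [hf'apply, hfF, hg]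
        ring
      have := hglt F hgF hne
      omega
    · have h1 : StmtAux.val F ≤ StmtAux.val F₀ :=
        hF₀max F (by simp only [Finset.mem_filter, Finset.mem_univ, true_and]; exact hfF)
      have h2 : StmtAux.val F ≠ StmtAux.val F₀ :=
        fun hv => hne (StmtAux.val_injective hv)
      omega
  have hspan' := ih (StmtAux.val F₀) (by omega) f' hf'des hf'unif hmeas
  have hfeq : f = f' + m • pod n k t a b c := by
    rw [hf'def]
    abel
  rw [hfeq]
  exact Submodule.add_mem _ hspan'
    (Submodule.smul_mem _ m (Submodule.subset_span hgS))
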